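/- Let G be a connected graph with at least 5 vertices. G is not NCI if and only if there exist vertices v_1, v_2, v_3, v_4, v_5 of G such that v_1 is a leaf in the induced subgraph H = G[v_1,...,v_5], and either P_5 or the tree T is a spanning tree of H in which every neighbor of v_1 has degree 2. -/

import Mathlib

/-- A graph is a "complete intersection" (CI) iff it is a disjoint union of
edges and singletons, i.e. every vertex has at most one neighbor. -/
def SimpleGraph.IsCIGraph {V : Type*} (G : SimpleGraph V) : Prop :=
  ∀ v : V, (G.neighborSet v).Subsingleton

/-- The inversion of `G` at a vertex `v`: the graph on `V \ {v}` whose edges are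
those of the induced subgraph of `G` on `V \ ({v} ∪ N(v))`. -/
def SimpleGraph.inversion {V : Type*} (G : SimpleGraph V) (v : V) :
    SimpleGraph {u : V // u ≠ v} where
  Adj a b := G.Adj a.1 b.1 ∧ ¬ G.Adj v a.1 ∧ ¬ G.Adj v b.1
  symm := ⟨fun a b h => ⟨h.1.symm, h.2.2, h.2.1⟩⟩
  loopless := ⟨fun a h => G.loopless.irrefl a.1 h.1⟩

/-- A graph is a nearly complete intersection (NCI) iff it is not a CI and
all of its inversions are CIs. -/
def SimpleGraph.IsNCI {V : Type*} (G : SimpleGraph V) : Prop :=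
  ¬ G.IsCIGraph ∧ ∀ v : V, (G.inversion v).IsCIGraph

/-- The tree `T` on 5 vertices: the path 0 — 1 — 2 together with the
two extra leaves 3 and 4 attached to the vertex 2. -/
def treeT : SimpleGraph (Fin 5) :=
  SimpleGraph.fromRel (fun a b =>
    (a = 0 ∧ b = 1) ∨ (a = 1 ∧ b = 2) ∨ (a = 2 ∧ b = 3) ∨ (a = 2 ∧ b = 4))

open SimpleGraph

/-! ### Decidability and small facts about the two model graphs -/

instance : DecidableRel (pathGraph 5).Adj :=
  fun _ _ => decidable_of_iff _ pathGraph_adj.symm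

instance : DecidableRel treeT.Adj :=
  fun a b => decidable_of_iff _ (SimpleGraph.fromRel_adj _ a b).symm

lemma path5_deg : ∀ i : Fin 5, ∃ j, (pathGraph 5).Adj i j := by decide

lemma treeT_deg : ∀ i : Fin 5, ∃ j, treeT.Adj i j := by decide

set_option synthInstance.maxSize 400 in
set_option maxHeartbeats 1000000 in
lemma path5_key : ∀ i j b c : Fin 5, (pathGraph 5).Adj i j →
      (∀ k, (pathGraph 5).Adj i k → k = j) → b ≠ c →
      (∀ k, (pathGraph 5).Adj j k ↔ (k = b ∨ k = c)) →
      ∃ a x y, (pathGraph 5).Adj a x ∧ (pathGraph 5).Adj a y ∧ x ≠ y ∧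
        a ≠ i ∧ a ≠ j ∧ x ≠ i ∧ x ≠ j ∧ y ≠ i ∧ y ≠ j := by decide

set_option synthInstance.maxSize 400 in
set_option maxHeartbeats 1000000 in
lemma treeT_key : ∀ i j b c : Fin 5, treeT.Adj i j →
      (∀ k, treeT.Adj i k → k = j) → b ≠ c →
      (∀ k, treeT.Adj j k ↔ (k = b ∨ k = c)) →
      ∃ a x y, treeT.Adj a x ∧ treeT.Adj a y ∧ x ≠ y ∧
        a ≠ i ∧ a ≠ j ∧ x ≠ i ∧ x ≠ j ∧ y ≠ i ∧ y ≠ j := by decide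

lemma path5_adj0 : ∀ j, (pathGraph 5).Adj 0 j → j = 1 := by decide
lemma treeT_adj0 : ∀ j, treeT.Adj 0 j → j = 1 := by decide
lemma path5_ns1 : ∀ x : Fin 5, (pathGraph 5).Adj 1 x ↔ (x = 0 ∨ x = 2) := by decide
lemma treeT_ns1 : ∀ x : Fin 5, treeT.Adj 1 x ↔ (x = 0 ∨ x = 2) := by decide

lemma path5_hF0 : ∀ j, (pathGraph 5).Adj 0 j → ((pathGraph 5).neighborSet j).ncard = 2 := by
  intro j hj
  have hj1 := path5_adj0 j hj
  subst hj1
  have hset : (pathGraph 5).neighborSet 1 = {0, 2} := by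
    ext x
    simp only [mem_neighborSet, Set.mem_insert_iff, Set.mem_singleton_iff]
    exact path5_ns1 x
  rw [hset, Set.ncard_pair (by decide)]

lemma treeT_hF0 : ∀ j, treeT.Adj 0 j → (treeT.neighborSet j).ncard = 2 := by
  intro j hj
  have hj1 := treeT_adj0 j hj
  subst hj1
  have hset : treeT.neighborSet 1 = {0, 2} := by
    ext x
    simp only [mem_neighborSet, Set.mem_insert_iff, Set.mem_singleton_iff]
    exact treeT_ns1 x
  rw [hset, Set.ncard_pair (by decide)]


lemma nodup5 {V : Type*} {v0 v1 v2 v3 v4 : V}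
    (h01 : v0 ≠ v1) (h02 : v0 ≠ v2) (h03 : v0 ≠ v3) (h04 : v0 ≠ v4)
    (h12 : v1 ≠ v2) (h13 : v1 ≠ v3) (h14 : v1 ≠ v4)
    (h23 : v2 ≠ v3) (h24 : v2 ≠ v4) (h34 : v3 ≠ v4) :
    List.Nodup [v0, v1, v2, v3, v4] := by
  simp_all [List.nodup_cons]

lemma inj5 {V : Type*} {v0 v1 v2 v3 v4 : V}
    (h01 : v0 ≠ v1) (h02 : v0 ≠ v2) (h03 : v0 ≠ v3) (h04 : v0 ≠ v4)
    (h12 : v1 ≠ v2) (h13 : v1 ≠ v3) (h14 : v1 ≠ v4)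
    (h23 : v2 ≠ v3) (h24 : v2 ≠ v4) (h34 : v3 ≠ v4) :
    Function.Injective ![v0, v1, v2, v3, v4] := by
  intro i j hij
  fin_cases i <;> fin_cases j <;> simp_all

/-! ### CI graphs -/


lemma ci_walk_eq_or_adj {V : Type*} {G : SimpleGraph V} (h : G.IsCIGraph)
    {u w : V} (p : G.Walk u w) : u = w ∨ G.Adj u w := by
  induction p with
  | nil => exact Or.inl rfl
  | @cons u u' w h' p ih =>
    rcases ih with rfl | hadj
    · exact Or.inr h'
    · left
      exact h u' (by exact h'.symm : u ∈ G.neighborSet u') (by exact hadj : w ∈ G.neighborSet u')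

lemma not_ci {V : Type*} [Fintype V] (G : SimpleGraph V) (hconn : G.Connected)
    (hcard : 3 ≤ Fintype.card V) : ¬ G.IsCIGraph := by
  intro h
  obtain ⟨f⟩ := Function.Embedding.nonempty_of_card_le (by simpa using hcard : Fintype.card (Fin 3) ≤ Fintype.card V)
  have h01 : f 0 ≠ f 1 := fun e => by simpa using f.injective e
  have h02 : f 0 ≠ f 2 := fun e => by simpa using f.injective e
  have h12 : f 1 ≠ f 2 := fun e => by simpa using f.injective e
  obtain ⟨p⟩ := hconn.preconnected (f 0) (f 1)
  obtain ⟨q⟩ := hconn.preconnected (f 0) (f 2)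
  have a1 : G.Adj (f 0) (f 1) := (ci_walk_eq_or_adj h p).resolve_left h01
  have a2 : G.Adj (f 0) (f 2) := (ci_walk_eq_or_adj h q).resolve_left h02
  exact h12 (h (f 0) (by exact a1 : f 1 ∈ G.neighborSet (f 0)) (by exact a2 : f 2 ∈ G.neighborSet (f 0)))

/-- The "configuration" equivalent to non-NCI-ness for connected graphs on ≥ 3 vertices. -/
def ConfigProp {V : Type*} (G : SimpleGraph V) : Prop :=
  ∃ v a b c : V, G.Adj a b ∧ G.Adj a c ∧ b ≠ c ∧ v ≠ a ∧ v ≠ b ∧ v ≠ c ∧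
    ¬ G.Adj v a ∧ ¬ G.Adj v b ∧ ¬ G.Adj v c

lemma not_nci_iff_config {V : Type*} [Fintype V] (G : SimpleGraph V)
    (hconn : G.Connected) (hcard : 3 ≤ Fintype.card V) :
    ¬ G.IsNCI ↔ ConfigProp G := by
  constructor
  · intro h
    rcases not_and_or.mp h with h1 | h2
    · exact absurd (not_not.mp h1) (not_ci G hconn hcard)
    · push_neg at h2
      obtain ⟨v, hv⟩ := h2
      rw [SimpleGraph.IsCIGraph] at hv
      push_neg at hv
      obtain ⟨a, ha⟩ := hv
      unfold Set.Nontrivial at ha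
      obtain ⟨b, hb, c, hc, hbc⟩ := ha
      have hb' : (G.inversion v).Adj a b := hb
      have hc' : (G.inversion v).Adj a c := hc
      exact ⟨v, a.1, b.1, c.1, hb'.1, hc'.1, fun e => hbc (Subtype.ext e),
        Ne.symm a.2, Ne.symm b.2, Ne.symm c.2, hb'.2.1, hb'.2.2, hc'.2.2⟩
  · rintro ⟨v, a, b, c, hab, hac, hbc, hva, hvb, hvc, hnva, hnvb, hnvc⟩
    rintro ⟨-, hall⟩
    have h1 : (G.inversion v).Adj ⟨a, hva.symm⟩ ⟨b, hvb.symm⟩ := And.intro hab ⟨hnva, hnvb⟩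
    have h2 : (G.inversion v).Adj ⟨a, hva.symm⟩ ⟨c, hvc.symm⟩ := And.intro hac ⟨hnva, hnvc⟩
    have := hall v ⟨a, hva.symm⟩ (by exact h1) (by exact h2)
    exact hbc (congrArg Subtype.val this)

/-! ### The right-hand side as a predicate -/

def RHSProp {V : Type*} (G : SimpleGraph V) : Prop :=
  ∃ v₁ v₂ v₃ v₄ v₅ : V, List.Nodup [v₁, v₂, v₃, v₄, v₅] ∧
    ((G.induce ({v₁, v₂, v₃, v₄, v₅} : Set V)).neighborSet
      ⟨v₁, by simp⟩).ncard = 1 ∧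
    ∃ T' : SimpleGraph ({v₁, v₂, v₃, v₄, v₅} : Set V),
      T' ≤ G.induce ({v₁, v₂, v₃, v₄, v₅} : Set V) ∧
      (Nonempty (T' ≃g SimpleGraph.pathGraph 5) ∨ Nonempty (T' ≃g treeT)) ∧
      ∀ u, T'.Adj ⟨v₁, by simp⟩ u → (T'.neighborSet u).ncard = 2

/-! ### From a configuration pattern on five vertices to RHSProp -/

lemma helper {V : Type*} (G : SimpleGraph V) (w : Fin 5 → V)
    (hinj : Function.Injective w)
    (F : SimpleGraph (Fin 5))
    (hiso : Nonempty (F ≃g SimpleGraph.pathGraph 5) ∨ Nonempty (F ≃g treeT))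
    (hF0 : ∀ j, F.Adj 0 j → (F.neighborSet j).ncard = 2)
    (hFadj : ∀ i j, F.Adj i j → G.Adj (w i) (w j))
    (hG1 : G.Adj (w 0) (w 1))
    (hGnot : ∀ i : Fin 5, 2 ≤ (i : ℕ) → ¬ G.Adj (w 0) (w i)) :
    RHSProp G := by
  have hne : ∀ i j : Fin 5, i ≠ j → w i ≠ w j := fun i j h e => h (hinj e)
  refine ⟨w 0, w 1, w 2, w 3, w 4, ?_, ?_, ?_⟩
  · exact nodup5 (hne 0 1 (by decide)) (hne 0 2 (by decide)) (hne 0 3 (by decide))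
      (hne 0 4 (by decide)) (hne 1 2 (by decide)) (hne 1 3 (by decide))
      (hne 1 4 (by decide)) (hne 2 3 (by decide)) (hne 2 4 (by decide))
      (hne 3 4 (by decide))
  · have hns : (G.induce ({w 0, w 1, w 2, w 3, w 4} : Set V)).neighborSet ⟨w 0, by simp⟩
        = {⟨w 1, by simp⟩} := by
      ext a
      obtain ⟨x, hx⟩ := a
      simp only [mem_neighborSet, comap_adj, Function.Embedding.coe_subtype,
        Set.mem_singleton_iff, Subtype.mk.injEq]
      constructor
      · intro hadj
        simp only [Set.mem_insert_iff, Set.mem_singleton_iff] at hx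
        rcases hx with rfl | rfl | rfl | rfl | rfl
        · exact absurd hadj (G.irrefl)
        · rfl
        · exact absurd hadj (hGnot 2 (by decide))
        · exact absurd hadj (hGnot 3 (by decide))
        · exact absurd hadj (hGnot 4 (by decide))
      · rintro rfl
        exact hG1
    rw [hns, Set.ncard_singleton]
  · -- build the equivalence between Fin 5 and the vertex set
    have hmem : ∀ i : Fin 5, w i ∈ ({w 0, w 1, w 2, w 3, w 4} : Set V) := by
      intro i
      fin_cases i <;> simp
    set S : Set V := ({w 0, w 1, w 2, w 3, w 4} : Set V) with hS
    have hbij : Function.Bijective (fun i : Fin 5 => (⟨w i, hmem i⟩ : S)) := by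
      constructor
      · intro i j h
        exact hinj (congrArg Subtype.val h)
      · rintro ⟨x, hx⟩
        simp only [hS, Set.mem_insert_iff, Set.mem_singleton_iff] at hx
        rcases hx with rfl | rfl | rfl | rfl | rfl
        · exact ⟨0, rfl⟩
        · exact ⟨1, rfl⟩
        · exact ⟨2, rfl⟩
        · exact ⟨3, rfl⟩
        · exact ⟨4, rfl⟩
    let ψ : Fin 5 ≃ S := Equiv.ofBijective _ hbij
    have hψ : ∀ i, (ψ i : V) = w i := fun i => rfl
    have key : ∀ a : S, w (ψ.symm a) = (a : V) := by
      intro a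
      rw [← hψ (ψ.symm a), ψ.apply_symm_apply]
    refine ⟨F.comap ψ.symm.toEmbedding, ?_, ?_, ?_⟩
    · intro a b hab
      simp only [comap_adj, Equiv.coe_toEmbedding] at hab
      have := hFadj _ _ hab
      rw [key a, key b] at this
      exact this
    · rcases hiso with he | he
      · exact Or.inl ⟨(SimpleGraph.Iso.comap ψ.symm F).trans he.some⟩
      · exact Or.inr ⟨(SimpleGraph.Iso.comap ψ.symm F).trans he.some⟩
    · intro u hu
      have h0 : ∀ pf : w 0 ∈ S, ψ.symm ⟨w 0, pf⟩ = 0 := by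
        intro pf
        rw [Equiv.symm_apply_eq]
        exact Subtype.ext rfl
      simp only [comap_adj, Equiv.coe_toEmbedding] at hu
      rw [h0] at hu
      have hnsT : (F.comap ψ.symm.toEmbedding).neighborSet u
          = ψ.symm ⁻¹' (F.neighborSet (ψ.symm u)) := rfl
      rw [hnsT, ← Equiv.image_eq_preimage_symm, Set.ncard_image_of_injective _ ψ.injective]
      exact hF0 _ hu

/-! ### From RHSProp back to a configuration -/

lemma rhs_to_config_aux {S : Type*} (G' T' : SimpleGraph S) (v1 : S)
    (F : SimpleGraph (Fin 5)) (e : T' ≃g F)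
    (hFdeg : ∀ i, ∃ j, F.Adj i j)
    (hFkey : ∀ i j b c : Fin 5, F.Adj i j → (∀ k, F.Adj i k → k = j) → b ≠ c →
      (∀ k, F.Adj j k ↔ (k = b ∨ k = c)) →
      ∃ a x y, F.Adj a x ∧ F.Adj a y ∧ x ≠ y ∧
        a ≠ i ∧ a ≠ j ∧ x ≠ i ∧ x ≠ j ∧ y ≠ i ∧ y ≠ j)
    (hle : T' ≤ G') (u0 : S) (hns : G'.neighborSet v1 = {u0})
    (hdeg : ∀ u, T'.Adj v1 u → (T'.neighborSet u).ncard = 2) :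
    ∃ a x y : S, T'.Adj a x ∧ T'.Adj a y ∧ x ≠ y ∧
      a ≠ v1 ∧ a ≠ u0 ∧ x ≠ v1 ∧ x ≠ u0 ∧ y ≠ v1 ∧ y ≠ u0 := by
  have huniq : ∀ x, T'.Adj v1 x → x = u0 := by
    intro x hx
    have : x ∈ G'.neighborSet v1 := hle hx
    rw [hns] at this
    exact this
  obtain ⟨j', hj'⟩ := hFdeg (e v1)
  have hu : T'.Adj v1 (e.symm j') := by
    rw [← e.map_adj_iff]
    simpa using hj'
  have huu0 : e.symm j' = u0 := huniq _ hu
  have hadj0 : T'.Adj v1 u0 := huu0 ▸ hu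
  have hFij : F.Adj (e v1) (e u0) := e.map_adj_iff.mpr hadj0
  have hFuniq : ∀ k, F.Adj (e v1) k → k = e u0 := by
    intro k hk
    have : T'.Adj v1 (e.symm k) := by
      rw [← e.map_adj_iff]
      simpa using hk
    have := huniq _ this
    rw [← this]
    simp
  have himg : F.neighborSet (e u0) = (e : S ≃ Fin 5) '' (T'.neighborSet u0) := by
    ext k
    constructor
    · intro hk
      refine ⟨e.symm k, ?_, by simp⟩
      have : F.Adj (e u0) (e (e.symm k)) := by simpa using hk
      exact e.map_adj_iff.mp this
    · rintro ⟨x, hx, rfl⟩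
      exact e.map_adj_iff.mpr hx
  have hcard2 : (F.neighborSet (e u0)).ncard = 2 := by
    rw [himg, Set.ncard_image_of_injective _ (e : S ≃ Fin 5).injective]
    exact hdeg u0 hadj0
  obtain ⟨b, c, hbc, hbceq⟩ := Set.ncard_eq_two.mp hcard2
  have hbciff : ∀ k, F.Adj (e u0) k ↔ (k = b ∨ k = c) := by
    intro k
    constructor
    · intro hk
      have : k ∈ F.neighborSet (e u0) := hk
      rw [hbceq] at this
      exact this
    · intro hk
      have : k ∈ ({b, c} : Set (Fin 5)) := hk
      rw [← hbceq] at this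
      exact this
  obtain ⟨a, x, y, hax, hay, hxy, hai, haj, hxi, hxj, hyi, hyj⟩ :=
    hFkey (e v1) (e u0) b c hFij hFuniq hbc hbciff
  refine ⟨e.symm a, e.symm x, e.symm y, ?_, ?_, ?_, ?_, ?_, ?_, ?_, ?_, ?_⟩
  · rw [← e.map_adj_iff]; simpa using hax
  · rw [← e.map_adj_iff]; simpa using hay
  · intro h
    exact hxy (by rw [← RelIso.apply_symm_apply e x, ← RelIso.apply_symm_apply e y, h])
  · intro h; exact hai (by rw [← h]; exact (RelIso.apply_symm_apply e a).symm)
  · intro h; exact haj (by rw [← h]; exact (RelIso.apply_symm_apply e a).symm)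
  · intro h; exact hxi (by rw [← h]; exact (RelIso.apply_symm_apply e x).symm)
  · intro h; exact hxj (by rw [← h]; exact (RelIso.apply_symm_apply e x).symm)
  · intro h; exact hyi (by rw [← h]; exact (RelIso.apply_symm_apply e y).symm)
  · intro h; exact hyj (by rw [← h]; exact (RelIso.apply_symm_apply e y).symm)

lemma rhs_to_config {V : Type*} (G : SimpleGraph V) (h : RHSProp G) : ConfigProp G := by
  obtain ⟨v₁, v₂, v₃, v₄, v₅, hnd, hleaf, T', hle, hiso, hdeg⟩ := h
  obtain ⟨u0, hu0⟩ := Set.ncard_eq_one.mp hleaf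
  have key : ∃ a x y : ↥({v₁, v₂, v₃, v₄, v₅} : Set V), T'.Adj a x ∧ T'.Adj a y ∧ x ≠ y ∧
      a ≠ ⟨v₁, by simp⟩ ∧ a ≠ u0 ∧ x ≠ ⟨v₁, by simp⟩ ∧ x ≠ u0 ∧
      y ≠ ⟨v₁, by simp⟩ ∧ y ≠ u0 := by
    rcases hiso with he | he
    · exact rhs_to_config_aux _ T' _ _ he.some path5_deg path5_key hle u0 hu0 hdeg
    · exact rhs_to_config_aux _ T' _ _ he.some treeT_deg treeT_key hle u0 hu0 hdeg
  obtain ⟨a, x, y, hax, hay, hxy, hav, hau, hxv, hxu, hyv, hyu⟩ := key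
  have hGax : G.Adj (a : V) (x : V) := hle hax
  have hGay : G.Adj (a : V) (y : V) := hle hay
  have hnadj : ∀ z : ↥({v₁, v₂, v₃, v₄, v₅} : Set V), z ≠ ⟨v₁, by simp⟩ → z ≠ u0 →
      ¬ G.Adj v₁ (z : V) := by
    intro z hzv hzu hadj
    have : z ∈ (G.induce ({v₁, v₂, v₃, v₄, v₅} : Set V)).neighborSet ⟨v₁, by simp⟩ := by
      exact hadj
    rw [hu0] at this
    exact hzu this
  refine ⟨v₁, a, x, y, hGax, hGay, fun h => hxy (Subtype.ext h), ?_, ?_, ?_,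
    hnadj a hav hau, hnadj x hxv hxu, hnadj y hyv hyu⟩
  · intro h; exact hav (Subtype.ext h.symm)
  · intro h; exact hxv (Subtype.ext h.symm)
  · intro h; exact hyv (Subtype.ext h.symm)

/-! ### From a configuration to RHSProp, via shortest paths -/

lemma step_back {V : Type*} {G : SimpleGraph V} (hconn : G.Connected) {v a : V}
    (h : 1 ≤ G.dist v a) :
    ∃ x, G.Adj x a ∧ G.dist v x = G.dist v a - 1 := by
  have h0 : G.dist v a ≠ 0 := by omega
  have hne : v ≠ a := (SimpleGraph.dist_ne_zero_iff_ne_and_reachable.mp h0).1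
  obtain ⟨p, hp⟩ := SimpleGraph.exists_walk_of_dist_ne_zero h0
  obtain ⟨x, h1, q, hq⟩ := SimpleGraph.Walk.exists_eq_cons_of_ne hne.symm p.reverse
  have hlen : q.length = G.dist v a - 1 := by
    have := congrArg SimpleGraph.Walk.length hq
    rw [SimpleGraph.Walk.length_reverse, SimpleGraph.Walk.length_cons, hp] at this
    omega
  have hle1 : G.dist v x ≤ G.dist v a - 1 := by
    have := SimpleGraph.dist_le q.reverse
    rw [SimpleGraph.Walk.length_reverse, hlen] at this
    rwa [SimpleGraph.dist_comm] at *
  have hge : G.dist v a ≤ G.dist v x + 1 := by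
    have htri := hconn.dist_triangle (u := v) (v := x) (w := a)
    have hxa : G.dist x a = 1 := SimpleGraph.dist_eq_one_iff_adj.mpr h1.symm
    omega
  exact ⟨x, h1.symm, by omega⟩

lemma dist_two_not_adj {V : Type*} {G : SimpleGraph V} {v x : V} (h : G.dist v x = 2) :
    ¬ G.Adj v x := fun hadj => by
  rw [SimpleGraph.dist_eq_one_iff_adj.mpr hadj] at h
  omega

lemma dist_ne {V : Type*} {G : SimpleGraph V} {v x : V} {d : ℕ} (hd : G.dist v x = d)
    (h : 1 ≤ d) : v ≠ x := by
  have h0 : G.dist v x ≠ 0 := by omega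
  exact (SimpleGraph.dist_ne_zero_iff_ne_and_reachable.mp h0).1

lemma config_to_rhs {V : Type*} (G : SimpleGraph V) (hconn : G.Connected)
    (h : ConfigProp G) : RHSProp G := by
  obtain ⟨v, a, b, c, hab, hac, hbc, hva, hvb, hvc, hnva, hnvb, hnvc⟩ := h
  -- strong induction on the distance from v to a
  have main : ∀ d : ℕ, ∀ a b c : V, G.dist v a = d → G.Adj a b → G.Adj a c → b ≠ c →
      v ≠ b → v ≠ c → ¬ G.Adj v a → ¬ G.Adj v b → ¬ G.Adj v c → RHSProp G := by
    intro d
    induction d using Nat.strong_induction_on with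
    | _ d ih =>
      intro a b c hd hab hac hbc hvb hvc hnva hnvb hnvc
      have hva : v ≠ a := by
        intro h
        subst h
        exact hnvb hab
      have hd1 : 1 ≤ d := by
        rcases Nat.eq_zero_or_pos d with h0 | h; swap
        · omega
        · exfalso
          rw [h0] at hd
          exact hva ((SimpleGraph.Connected.dist_eq_zero_iff hconn).mp hd)
      have hd2 : 2 ≤ d := by
        rcases Nat.lt_or_ge d 2 with h | h; swap
        · omega
        · exfalso
          have : d = 1 := by omega
          rw [this] at hd
          exact hnva (SimpleGraph.dist_eq_one_iff_adj.mp hd)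
      -- step back once: x adjacent to a with dist v x = d - 1
      obtain ⟨x, hxa, hxd⟩ := step_back hconn (v := v) (a := a) (by omega)
      rw [hd] at hxd
      by_cases hcase : d = 2
      · -- tree T case: v — x — a, with leaves b c on a
        subst hcase
        have hvx : G.Adj v x := SimpleGraph.dist_eq_one_iff_adj.mp (by omega)
        have hxb : x ≠ b := fun h => hnvb (h ▸ hvx)
        have hxc : x ≠ c := fun h => hnvc (h ▸ hvx)
        have hxne : v ≠ x := hvx.ne
        have hxa' : x ≠ a := fun h => hnva (h ▸ hvx)
        apply helper G ![v, x, a, b, c] ?_ treeT (Or.inr ⟨RelIso.refl _⟩) treeT_hF0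
        · intro i j hij
          fin_cases i <;> fin_cases j <;>
            first
              | exact absurd hij (by decide)
              | exact hvx | exact hvx.symm
              | exact hxa.symm | exact hxa
              | exact hab | exact hab.symm
              | exact hac | exact hac.symm
        · exact hvx
        · intro i hi
          fin_cases i
          · exact absurd hi (by decide)
          · exact absurd hi (by decide)
          · exact hnva
          · exact hnvb
          · exact hnvc
        · exact inj5 hxne hva hvb hvc hxa' hxb hxc hab.ne hac.ne hbc
      · by_cases hcase3 : d = 3
        · -- path P₅ case: v — y — x — a — b' where b' ∈ {b, c}, b' ≠ x
          subst hcase3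
          obtain ⟨y, hyx, hyd⟩ := step_back hconn (v := v) (a := x) (by omega)
          rw [hxd] at hyd
          have hvy : G.Adj v y := SimpleGraph.dist_eq_one_iff_adj.mp (by omega)
          have hnvx : ¬ G.Adj v x := dist_two_not_adj hxd
          have hvxne : v ≠ x := dist_ne hxd (by omega)
          -- choose b' ∈ {b, c} with b' ≠ x
          obtain ⟨b', hab', hnvb', hvb', hb'x⟩ :
              ∃ b', G.Adj a b' ∧ ¬ G.Adj v b' ∧ v ≠ b' ∧ b' ≠ x := by
            by_cases hbx : b = x
            · exact ⟨c, hac, hnvc, hvc, fun h => hbc (hbx ▸ h ▸ rfl)⟩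
            · exact ⟨b, hab, hnvb, hvb, hbx⟩
          have hyb' : y ≠ b' := fun h => hnvb' (h ▸ hvy)
          have hya : y ≠ a := fun h => hnva (h ▸ hvy)
          have hvyne : v ≠ y := hvy.ne
          have hyx' : y ≠ x := hyx.ne
          have hxa' : x ≠ a := hxa.ne
          have hxb' : x ≠ b' := Ne.symm hb'x
          have hab'ne : a ≠ b' := hab'.ne
          apply helper G ![v, y, x, a, b'] ?_ (pathGraph 5) (Or.inl ⟨RelIso.refl _⟩) path5_hF0
          · intro i j hij
            fin_cases i <;> fin_cases j <;>
              first
                | exact absurd hij (by decide)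
                | exact hvy | exact hvy.symm
                | exact hyx.symm | exact hyx
                | exact hxa | exact hxa.symm
                | exact hab' | exact hab'.symm
          · exact hvy
          · intro i hi
            fin_cases i
            · exact absurd hi (by decide)
            · exact absurd hi (by decide)
            · exact hnvx
            · exact hnva
            · exact hnvb'
          · exact inj5 hvyne hvxne hva hvb' hyx' hya hyb' hxa' hxb' hab'ne
        · -- d ≥ 4: produce a closer configuration and use the IH
          have hd4 : 4 ≤ d := by omega
          obtain ⟨y, hyx, hyd⟩ := step_back hconn (v := v) (a := x) (by omega)
          rw [hxd] at hyd
          -- new triple: center x, leaves a and y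
          have hnvx : ¬ G.Adj v x := fun h => by
            rw [SimpleGraph.dist_eq_one_iff_adj.mpr h] at hxd
            omega
          have hnvy : ¬ G.Adj v y := fun h => by
            rw [SimpleGraph.dist_eq_one_iff_adj.mpr h] at hyd
            omega
          have hay : a ≠ y := by
            intro h
            rw [← h] at hyd
            omega
          have hvy : v ≠ y := dist_ne hyd (by omega)
          exact ih (d - 1) (by omega) x a y hxd hxa hyx.symm hay hva hvy hnvx hnva hnvy
  exact main (G.dist v a) a b c rfl hab hac hbc hvb hvc hnva hnvb hnvc

/-! ### Main theorem -/

/-- A connected graph G on at least 5 vertices is not NCI iff there are vertices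
v₁,…,v₅ such that v₁ is a leaf in the induced subgraph H = G[v₁,…,v₅] and either
P₅ or the tree T is a spanning tree of H in which every neighbor of v₁ has
degree 2. -/
theorem not_nci_iff {V : Type*} [Fintype V]
    (G : SimpleGraph V) (hconn : G.Connected) (hcard : 5 ≤ Fintype.card V) :
    ¬ G.IsNCI ↔
      ∃ v₁ v₂ v₃ v₄ v₅ : V, List.Nodup [v₁, v₂, v₃, v₄, v₅] ∧
        ((G.induce ({v₁, v₂, v₃, v₄, v₅} : Set V)).neighborSet
          ⟨v₁, by simp⟩).ncard = 1 ∧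
        ∃ T' : SimpleGraph ({v₁, v₂, v₃, v₄, v₅} : Set V),
          T' ≤ G.induce ({v₁, v₂, v₃, v₄, v₅} : Set V) ∧
          (Nonempty (T' ≃g SimpleGraph.pathGraph 5) ∨ Nonempty (T' ≃g treeT)) ∧
          ∀ u, T'.Adj ⟨v₁, by simp⟩ u → (T'.neighborSet u).ncard = 2 := by
  have : ¬ G.IsNCI ↔ RHSProp G := by
    rw [not_nci_iff_config G hconn (by omega)]
    exact ⟨config_to_rhs G hconn, rhs_to_config G⟩
  exact this
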